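/- Let x_1,…,x_n ∈ ℝ^d and suppose every configuration over an r-element subset of {1,…,n} has positive definite pooled SSP matrix. Let R = (R_1,…,R_g) minimize det W_R over all configurations over r-element subsets of {1,…,n}, and let j ≠ l be indices of two nonempty clusters. Define the linear form h_{jl}(y) = 2·(y − (m_R(j)+m_R(l))/2)^T W_R^{-1} (m_R(j) − m_R(l)). Then h_{jl}(x_i) ≥ 0 for every i ∈ R_j and h_{jl}(x_i) ≤ 0 for every i ∈ R_l; that is, the clusters R_j and R_l are separated by the hyperplane {y : h_{jl}(y) = 0}. -/

import Mathlib

open Matrix Finset Real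

/-- The sample mean of the points `x i`, `i ∈ S`; a fixed a-priori vector `dflt` if `S = ∅`. -/
noncomputable def clusterMean {n d : ℕ} (x : Fin n → Fin d → ℝ) (dflt : Fin d → ℝ)
    (S : Finset (Fin n)) : Fin d → ℝ :=
  if S.Nonempty then (S.card : ℝ)⁻¹ • ∑ i ∈ S, x i else dflt

/-- The pooled (within-groups) SSP matrix of the configuration `C` for the data `x`:
`W = Σ_j Σ_{i ∈ C j} (x i − m_j)(x i − m_j)ᵀ`, where `m_j` is the sample mean of cluster `j`. -/
noncomputable def pooledSSP {n d g : ℕ} (x : Fin n → Fin d → ℝ) (dflt : Fin g → Fin d → ℝ)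
    (C : Fin g → Finset (Fin n)) : Matrix (Fin d) (Fin d) ℝ :=
  ∑ j, ∑ i ∈ C j, Matrix.vecMulVec (x i - clusterMean x (dflt j) (C j))
    (x i - clusterMean x (dflt j) (C j))

/-- A configuration over an `r`-element subset of `{1,…,n}`: a family of `g` pairwise
disjoint (possibly empty) clusters whose union has exactly `r` elements. -/
def IsConfig {n g : ℕ} (r : ℕ) (C : Fin g → Finset (Fin n)) : Prop :=
  (∀ j k : Fin g, j ≠ k → Disjoint (C j) (C k)) ∧ (Finset.univ.biUnion C).card = r

/-- A family of points of `ℝ^d` is in general position if any `d+1` of them are affinely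
independent. -/
def InGeneralPosition {n d : ℕ} (x : Fin n → Fin d → ℝ) : Prop :=
  ∀ s : Finset (Fin n), s.card = d + 1 → AffineIndependent ℝ (fun i : s => x (i : Fin n))

section aux
variable {n d : ℕ} (x : Fin n → Fin d → ℝ)

lemma centered_sum (S : Finset (Fin n)) (hS : S.Nonempty) (u v : Fin n → ℝ) :
    ∑ p ∈ S, (u p - (S.card : ℝ)⁻¹ * ∑ q ∈ S, u q) * (v p - (S.card : ℝ)⁻¹ * ∑ q ∈ S, v q)
      = (∑ p ∈ S, u p * v p) - (S.card : ℝ)⁻¹ * ((∑ p ∈ S, u p) * (∑ p ∈ S, v p)) := by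
  have hk : ((S.card : ℝ)) ≠ 0 := Nat.cast_ne_zero.mpr (Finset.card_ne_zero_of_mem hS.choose_spec)
  have expand : ∀ p ∈ S, (u p - (S.card : ℝ)⁻¹ * ∑ q ∈ S, u q) * (v p - (S.card : ℝ)⁻¹ * ∑ q ∈ S, v q)
      = u p * v p - ((S.card : ℝ)⁻¹ * ∑ q ∈ S, v q) * u p
        - ((S.card : ℝ)⁻¹ * ∑ q ∈ S, u q) * v p
        + ((S.card : ℝ)⁻¹ * ∑ q ∈ S, u q) * ((S.card : ℝ)⁻¹ * ∑ q ∈ S, v q) := by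
    intro p _; ring
  rw [Finset.sum_congr rfl expand]
  simp only [Finset.sum_add_distrib, Finset.sum_sub_distrib, ← Finset.mul_sum,
    Finset.sum_const, nsmul_eq_mul]
  field_simp
  ring

lemma clusterMean_apply (dflt : Fin d → ℝ) (S : Finset (Fin n)) (hS : S.Nonempty) (t : Fin d) :
    clusterMean x dflt S t = (S.card : ℝ)⁻¹ * ∑ i ∈ S, x i t := by
  simp [clusterMean, hS, Finset.sum_apply]

lemma ssp_entry (dflt : Fin d → ℝ) (S : Finset (Fin n)) (hS : S.Nonempty) (p q : Fin d) :
    ∑ i ∈ S, (x i - clusterMean x dflt S) p * (x i - clusterMean x dflt S) q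
      = (∑ i ∈ S, x i p * x i q)
        - (S.card : ℝ)⁻¹ * ((∑ i ∈ S, x i p) * (∑ i ∈ S, x i q)) := by
  have := centered_sum S hS (fun i => x i p) (fun i => x i q)
  simp only [Pi.sub_apply, clusterMean_apply x dflt S hS]
  exact this

/-- The within-cluster SSP matrix of a single cluster. -/
noncomputable def clSSP (dflt : Fin d → ℝ) (S : Finset (Fin n)) : Matrix (Fin d) (Fin d) ℝ :=
  ∑ i ∈ S, Matrix.vecMulVec (x i - clusterMean x dflt S) (x i - clusterMean x dflt S)

lemma clSSP_erase (dflt : Fin d → ℝ) (S : Finset (Fin n)) (i : Fin n) (hi : i ∈ S)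
    (h2 : 2 ≤ S.card) :
    clSSP x dflt (S.erase i) = clSSP x dflt S
      - ((S.card : ℝ) / ((S.card : ℝ) - 1)) •
        Matrix.vecMulVec (x i - clusterMean x dflt S) (x i - clusterMean x dflt S) := by
  have hcard : (S.erase i).card = S.card - 1 := Finset.card_erase_of_mem hi
  have h1 : 1 ≤ S.card := le_trans one_le_two h2
  have hcastE : ((S.erase i).card : ℝ) = (S.card : ℝ) - 1 := by
    rw [hcard, Nat.cast_sub h1, Nat.cast_one]
  have hSne : S.Nonempty := ⟨i, hi⟩
  have hEne : (S.erase i).Nonempty := by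
    rw [← Finset.card_pos, hcard]; omega
  have hk : ((S.card : ℝ)) ≠ 0 := Nat.cast_ne_zero.mpr (by omega)
  have hk1 : ((S.card : ℝ)) - 1 ≠ 0 := by
    have : (2 : ℝ) ≤ (S.card : ℝ) := by exact_mod_cast h2
    linarith
  ext p q
  simp only [clSSP, Matrix.sub_apply, Matrix.smul_apply, Matrix.sum_apply,
    Matrix.vecMulVec_apply, smul_eq_mul]
  rw [ssp_entry x dflt (S.erase i) hEne p q, ssp_entry x dflt S hSne p q, hcastE]
  rw [Finset.sum_erase_eq_sub hi, Finset.sum_erase_eq_sub hi, Finset.sum_erase_eq_sub hi]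
  simp only [Pi.sub_apply, clusterMean_apply x dflt S hSne]
  field_simp
  ring

lemma clSSP_insert (dflt : Fin d → ℝ) (S : Finset (Fin n)) (i : Fin n) (hi : i ∉ S)
    (hS : S.Nonempty) :
    clSSP x dflt (insert i S) = clSSP x dflt S
      + ((S.card : ℝ) / ((S.card : ℝ) + 1)) •
        Matrix.vecMulVec (x i - clusterMean x dflt S) (x i - clusterMean x dflt S) := by
  have hcard : (insert i S).card = S.card + 1 := Finset.card_insert_of_notMem hi
  have hcastI : (((insert i S).card : ℝ)) = (S.card : ℝ) + 1 := by
    rw [hcard]; push_cast; ring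
  have hIne : (insert i S).Nonempty := Finset.insert_nonempty _ _
  have hk : ((S.card : ℝ)) ≠ 0 := Nat.cast_ne_zero.mpr (Finset.card_ne_zero_of_mem hS.choose_spec)
  have hk1 : ((S.card : ℝ)) + 1 ≠ 0 := by positivity
  ext p q
  simp only [clSSP, Matrix.add_apply, Matrix.smul_apply, Matrix.sum_apply,
    Matrix.vecMulVec_apply, smul_eq_mul]
  rw [ssp_entry x dflt (insert i S) hIne p q, ssp_entry x dflt S hS p q, hcastI]
  rw [Finset.sum_insert hi, Finset.sum_insert hi, Finset.sum_insert hi]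
  simp only [Pi.sub_apply, clusterMean_apply x dflt S hS]
  field_simp
  ring


end aux

section detcs
variable {d : ℕ}

lemma dot_symm (M : Matrix (Fin d) (Fin d) ℝ) (hM : Mᵀ = M) (a b : Fin d → ℝ) :
    a ⬝ᵥ M *ᵥ b = b ⬝ᵥ M *ᵥ a := by
  rw [Matrix.dotProduct_mulVec, ← Matrix.mulVec_transpose, hM, dotProduct_comm]

lemma psd_cs (M : Matrix (Fin d) (Fin d) ℝ) (hsym : Mᵀ = M)
    (hpsd : ∀ v : Fin d → ℝ, 0 ≤ v ⬝ᵥ M *ᵥ v) (a b : Fin d → ℝ) :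
    (a ⬝ᵥ M *ᵥ b) * (a ⬝ᵥ M *ᵥ b) ≤ (a ⬝ᵥ M *ᵥ a) * (b ⬝ᵥ M *ᵥ b) := by
  have hq : ∀ t : ℝ, 0 ≤ (b ⬝ᵥ M *ᵥ b) * (t * t) + (2 * (a ⬝ᵥ M *ᵥ b)) * t + (a ⬝ᵥ M *ᵥ a) := by
    intro t
    have h0 := hpsd (a + t • b)
    have e : (a + t • b) ⬝ᵥ M *ᵥ (a + t • b)
        = (b ⬝ᵥ M *ᵥ b) * (t * t) + (2 * (a ⬝ᵥ M *ᵥ b)) * t + (a ⬝ᵥ M *ᵥ a) := by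
      rw [Matrix.mulVec_add, Matrix.mulVec_smul, add_dotProduct, smul_dotProduct,
        dotProduct_add, dotProduct_add, dotProduct_smul,
        dotProduct_smul, dot_symm M hsym b a]
      simp only [smul_eq_mul]
      ring
    rw [e] at h0; exact h0
  have hd := discrim_le_zero hq
  rw [discrim] at hd
  nlinarith [hd]

lemma det_rank_two_update (W : Matrix (Fin d) (Fin d) ℝ) (hW : IsUnit W.det)
    (a b : Fin d → ℝ) (α β : ℝ) :
    (W + β • Matrix.vecMulVec b b - α • Matrix.vecMulVec a a).det
      = W.det * ((1 + β * (b ⬝ᵥ W⁻¹ *ᵥ b)) * (1 - α * (a ⬝ᵥ W⁻¹ *ᵥ a))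
          + α * β * ((b ⬝ᵥ W⁻¹ *ᵥ a) * (a ⬝ᵥ W⁻¹ *ᵥ b))) := by
  set U : Matrix (Fin d) (Fin 2) ℝ := Matrix.of fun k t => if t = 0 then b k else a k with hU
  set V : Matrix (Fin 2) (Fin d) ℝ := Matrix.of fun t k => if t = 0 then β * b k else -(α * a k)
    with hV
  have hUV : W + β • Matrix.vecMulVec b b - α • Matrix.vecMulVec a a = W + U * V := by
    ext p q
    simp only [Matrix.sub_apply, Matrix.add_apply, Matrix.smul_apply, Matrix.vecMulVec_apply,
      Matrix.mul_apply, Fin.sum_univ_two, hU, hV, Matrix.of_apply, smul_eq_mul]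
    norm_num
    ring
  have hfact : W + U * V = W * (1 + W⁻¹ * (U * V)) := by
    rw [Matrix.mul_add, Matrix.mul_one, ← Matrix.mul_assoc, Matrix.mul_nonsing_inv _ hW,
      Matrix.one_mul]
  have e00 : (V * (W⁻¹ * U)) 0 0 = β * (b ⬝ᵥ W⁻¹ *ᵥ b) := by
    simp only [Matrix.mul_apply, hU, hV, Matrix.of_apply, dotProduct, Matrix.mulVec,
      dotProduct, if_pos rfl, Finset.mul_sum]
    norm_num
    exact Finset.sum_congr rfl fun p _ => Finset.sum_congr rfl fun q _ => by ring
  have e01 : (V * (W⁻¹ * U)) 0 1 = β * (b ⬝ᵥ W⁻¹ *ᵥ a) := by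
    simp only [Matrix.mul_apply, hU, hV, Matrix.of_apply, dotProduct, Matrix.mulVec,
      dotProduct, Finset.mul_sum]
    norm_num
    exact Finset.sum_congr rfl fun p _ => Finset.sum_congr rfl fun q _ => by ring
  have e10 : (V * (W⁻¹ * U)) 1 0 = -(α * (a ⬝ᵥ W⁻¹ *ᵥ b)) := by
    simp only [Matrix.mul_apply, hU, hV, Matrix.of_apply, dotProduct, Matrix.mulVec,
      dotProduct, Finset.mul_sum]
    norm_num
    exact Finset.sum_congr rfl fun p _ => Finset.sum_congr rfl fun q _ => by ring
  have e11 : (V * (W⁻¹ * U)) 1 1 = -(α * (a ⬝ᵥ W⁻¹ *ᵥ a)) := by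
    simp only [Matrix.mul_apply, hU, hV, Matrix.of_apply, dotProduct, Matrix.mulVec,
      dotProduct, Finset.mul_sum]
    norm_num
    exact Finset.sum_congr rfl fun p _ => Finset.sum_congr rfl fun q _ => by ring
  rw [hUV, hfact, Matrix.det_mul]
  congr 1
  rw [← Matrix.mul_assoc, Matrix.det_one_add_mul_comm, Matrix.det_fin_two]
  simp only [Matrix.add_apply, Matrix.one_apply_eq, Matrix.one_apply_ne (by norm_num : (0 : Fin 2) ≠ 1),
    Matrix.one_apply_ne (by norm_num : (1 : Fin 2) ≠ 0), e00, e01, e10, e11]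
  ring


section move
variable {n d g : ℕ} (x : Fin n → Fin d → ℝ)

/-- The configuration obtained by moving the point `i` from cluster `j` to cluster `l`. -/
def moveCfg (C : Fin g → Finset (Fin n)) (j l : Fin g) (i : Fin n) : Fin g → Finset (Fin n) :=
  Function.update (Function.update C j ((C j).erase i)) l (insert i (C l))

lemma moveCfg_isConfig {r : ℕ} (C : Fin g → Finset (Fin n)) (hC : IsConfig r C)
    (j l : Fin g) (hjl : j ≠ l) (i : Fin n) (hij : i ∈ C j) :
    IsConfig r (moveCfg C j l i) := by
  obtain ⟨hdisj, hcard⟩ := hC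
  set P := moveCfg C j l i with hP
  have hPl : P l = insert i (C l) := by simp [hP, moveCfg]
  have hPj : P j = (C j).erase i := by
    simp [hP, moveCfg, Function.update_of_ne hjl]
  have hPk : ∀ k, k ≠ j → k ≠ l → P k = C k := by
    intro k hkj hkl
    simp [hP, moveCfg, Function.update_of_ne hkl, Function.update_of_ne hkj]
  have hsub : ∀ k, k ≠ l → P k ⊆ C k := by
    intro k hkl
    by_cases hkj : k = j
    · subst hkj; rw [hPj]; exact Finset.erase_subset _ _
    · rw [hPk k hkj hkl]
  constructor
  · intro a b hab
    by_cases hal : a = l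
    · by_cases hbj : b = j
      · rw [hal, hbj, hPl, hPj, Finset.disjoint_insert_left]
        exact ⟨Finset.notMem_erase i _,
          (hdisj l j (Ne.symm hjl)).mono_right (Finset.erase_subset _ _)⟩
      · have hbl : b ≠ l := fun hc => hab (hal.trans hc.symm)
        rw [hal, hPl, hPk b hbj hbl, Finset.disjoint_insert_left]
        exact ⟨fun hb => (Finset.disjoint_left.mp (hdisj j b (Ne.symm hbj))) hij hb,
          (hdisj l b (fun hc => hbl hc.symm))⟩
    · by_cases hbl : b = l
      · by_cases haj : a = j
        · rw [haj, hbl, hPl, hPj, Finset.disjoint_insert_right]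
          exact ⟨Finset.notMem_erase i _,
            (hdisj j l hjl).mono_left (Finset.erase_subset _ _)⟩
        · rw [hbl, hPl, hPk a haj hal, Finset.disjoint_insert_right]
          exact ⟨fun ha => (Finset.disjoint_left.mp (hdisj j a (Ne.symm haj))) hij ha,
            hdisj a l hal⟩
      · exact ((hdisj a b hab).mono (hsub a hal) (hsub b hbl))
  · rw [← hcard]
    congr 1
    apply Finset.ext
    intro y
    simp only [Finset.mem_biUnion, Finset.mem_univ, true_and]
    constructor
    · rintro ⟨k, hk⟩
      by_cases hkl : k = l
      · rw [hkl, hPl, Finset.mem_insert] at hk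
        rcases hk with rfl | hk
        · exact ⟨j, hij⟩
        · exact ⟨l, hk⟩
      · exact ⟨k, hsub k hkl hk⟩
    · rintro ⟨k, hk⟩
      by_cases hkj : k = j
      · rw [hkj] at hk
        by_cases hyi : y = i
        · exact ⟨l, by rw [hPl, hyi]; exact Finset.mem_insert_self _ _⟩
        · exact ⟨j, by rw [hPj]; exact Finset.mem_erase.mpr ⟨hyi, hk⟩⟩
      · by_cases hkl : k = l
        · rw [hkl] at hk
          exact ⟨l, by rw [hPl]; exact Finset.mem_insert_of_mem hk⟩
        · exact ⟨k, by rw [hPk k hkj hkl]; exact hk⟩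


lemma pooledSSP_eq_sum_clSSP (dflt : Fin g → Fin d → ℝ) (C : Fin g → Finset (Fin n)) :
    pooledSSP x dflt C = ∑ k, clSSP x (dflt k) (C k) := rfl

lemma pooledSSP_move (dflt : Fin g → Fin d → ℝ) (C : Fin g → Finset (Fin n))
    (j l : Fin g) (hjl : j ≠ l) (i : Fin n) (hij : i ∈ C j) (hil : i ∉ C l)
    (h2 : 2 ≤ (C j).card) (hl : (C l).Nonempty) :
    pooledSSP x dflt (moveCfg C j l i)
      = pooledSSP x dflt C
        + (((C l).card : ℝ) / (((C l).card : ℝ) + 1)) •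
            Matrix.vecMulVec (x i - clusterMean x (dflt l) (C l))
              (x i - clusterMean x (dflt l) (C l))
        - (((C j).card : ℝ) / (((C j).card : ℝ) - 1)) •
            Matrix.vecMulVec (x i - clusterMean x (dflt j) (C j))
              (x i - clusterMean x (dflt j) (C j)) := by
  set P := moveCfg C j l i with hP
  have hPl : P l = insert i (C l) := by simp [hP, moveCfg]
  have hPj : P j = (C j).erase i := by
    simp [hP, moveCfg, Function.update_of_ne hjl]
  have hPk : ∀ k, k ≠ j → k ≠ l → P k = C k := by
    intro k hkj hkl
    simp [hP, moveCfg, Function.update_of_ne hkl, Function.update_of_ne hkj]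
  have split : ∀ D : Fin g → Finset (Fin n),
      ∑ k, clSSP x (dflt k) (D k)
        = clSSP x (dflt j) (D j) + (clSSP x (dflt l) (D l)
            + ∑ k ∈ (Finset.univ.erase j).erase l, clSSP x (dflt k) (D k)) := by
    intro D
    rw [← Finset.add_sum_erase _ _ (Finset.mem_univ j)]
    rw [← Finset.add_sum_erase _ _ (Finset.mem_erase.mpr ⟨Ne.symm hjl, Finset.mem_univ l⟩)]
  rw [pooledSSP_eq_sum_clSSP, pooledSSP_eq_sum_clSSP, split P, split C]
  have htail : ∑ k ∈ (Finset.univ.erase j).erase l, clSSP x (dflt k) (P k)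
      = ∑ k ∈ (Finset.univ.erase j).erase l, clSSP x (dflt k) (C k) := by
    apply Finset.sum_congr rfl
    intro k hk
    have hkl : k ≠ l := (Finset.mem_erase.mp hk).1
    have hkj : k ≠ j := (Finset.mem_erase.mp (Finset.mem_erase.mp hk).2).1
    rw [hPk k hkj hkl]
  rw [htail, hPj, hPl, clSSP_erase x (dflt j) (C j) i hij h2,
    clSSP_insert x (dflt l) (C l) i hil hl]
  abel

end move

/-- Corollary 3.2(b) of the paper.  For a TDC-optimal configuration `C`
and two distinct nonempty clusters `j ≠ l`, the linear form
`h(y) = 2·(y − (m_j + m_l)/2)ᵀ W_C⁻¹ (m_j − m_l)` is nonnegative on cluster `j` and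
nonpositive on cluster `l`: the two clusters are separated by the hyperplane `h = 0`. -/
theorem tdc_hyperplane_separation {n d g r : ℕ}
    (x : Fin n → Fin d → ℝ) (dflt : Fin g → Fin d → ℝ)
    (hpos : ∀ P : Fin g → Finset (Fin n), IsConfig r P → (pooledSSP x dflt P).PosDef)
    (C : Fin g → Finset (Fin n)) (hC : IsConfig r C)
    (hopt : ∀ P : Fin g → Finset (Fin n), IsConfig r P →
      (pooledSSP x dflt C).det ≤ (pooledSSP x dflt P).det)
    (j l : Fin g) (hjl : j ≠ l) (hj : (C j).Nonempty) (hl : (C l).Nonempty)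
    (h : (Fin d → ℝ) → ℝ)
    (hh : ∀ y : Fin d → ℝ, h y =
      2 * ((y - (2 : ℝ)⁻¹ • (clusterMean x (dflt j) (C j) + clusterMean x (dflt l) (C l))) ⬝ᵥ
        ((pooledSSP x dflt C)⁻¹ *ᵥ
          (clusterMean x (dflt j) (C j) - clusterMean x (dflt l) (C l))))) :
    (∀ i ∈ C j, 0 ≤ h (x i)) ∧ (∀ i ∈ C l, h (x i) ≤ 0) := by
  have hWpd : (pooledSSP x dflt C).PosDef := hpos C hC
  set W := pooledSSP x dflt C with hWdef
  have hdetpos : 0 < W.det := hWpd.det_pos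
  have hdetunit : IsUnit W.det := isUnit_iff_ne_zero.mpr hdetpos.ne'
  have hWsym : Wᵀ = W := by
    ext p q
    simp [hWdef, pooledSSP, Matrix.transpose_apply, Matrix.sum_apply,
      Matrix.vecMulVec_apply, mul_comm]
  have hWinvsym : (W⁻¹)ᵀ = W⁻¹ := by rw [Matrix.transpose_nonsing_inv, hWsym]
  have hinvpsd : ∀ v : Fin d → ℝ, 0 ≤ v ⬝ᵥ W⁻¹ *ᵥ v := by
    intro v
    have := hWpd.inv.posSemidef.dotProduct_mulVec_nonneg v
    simpa using this
  have key : ∀ j' l' : Fin g, j' ≠ l' → (C j').Nonempty → (C l').Nonempty →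
      ∀ i ∈ C j',
      ((x i - clusterMean x (dflt j') (C j')) ⬝ᵥ W⁻¹ *ᵥ (x i - clusterMean x (dflt j') (C j')))
        ≤ ((x i - clusterMean x (dflt l') (C l')) ⬝ᵥ W⁻¹ *ᵥ
            (x i - clusterMean x (dflt l') (C l'))) := by
    intro j' l' hjl' hj' hl' i hi
    set a := x i - clusterMean x (dflt j') (C j') with ha
    set b := x i - clusterMean x (dflt l') (C l') with hb
    set A := a ⬝ᵥ W⁻¹ *ᵥ a with hA'
    set B := b ⬝ᵥ W⁻¹ *ᵥ b with hB'
    have hA : 0 ≤ A := hinvpsd a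
    have hB : 0 ≤ B := hinvpsd b
    by_cases h2 : 2 ≤ (C j').card
    · have hil : i ∉ C l' := Finset.disjoint_left.mp (hC.1 j' l' hjl') hi
      have hP := moveCfg_isConfig C hC j' l' hjl' i hi
      have hdet := hopt _ hP
      rw [pooledSSP_move x dflt C j' l' hjl' i hi hil h2 hl', ← hWdef, ← ha, ← hb,
        det_rank_two_update W hdetunit a b _ _, ← hA', ← hB'] at hdet
      have hcs : (a ⬝ᵥ W⁻¹ *ᵥ b) * (a ⬝ᵥ W⁻¹ *ᵥ b) ≤ A * B := psd_cs _ hWinvsym hinvpsd a b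
      have hsymab : b ⬝ᵥ W⁻¹ *ᵥ a = a ⬝ᵥ W⁻¹ *ᵥ b := dot_symm _ hWinvsym b a
      rw [hsymab] at hdet
      set kj := ((C j').card : ℝ) with hkj'
      set kl := ((C l').card : ℝ) with hkl'
      have hkj : (2 : ℝ) ≤ kj := by rw [hkj']; exact_mod_cast h2
      have hkl : (1 : ℝ) ≤ kl := by
        have h1 : 1 ≤ (C l').card := Finset.card_pos.mpr hl'
        rw [hkl']; exact_mod_cast h1
      have hα1 : 1 ≤ kj / (kj - 1) := by
        rw [le_div_iff₀ (by linarith)]; linarith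
      have hαpos : 0 < kj / (kj - 1) := lt_of_lt_of_le one_pos hα1
      have hβpos : 0 < kl / (kl + 1) := by positivity
      have hβ1 : kl / (kl + 1) ≤ 1 := by
        rw [div_le_one (by linarith)]; linarith
      set α := kj / (kj - 1)
      set β := kl / (kl + 1)
      have hD : 1 ≤ (1 + β * B) * (1 - α * A) + α * β * ((a ⬝ᵥ W⁻¹ *ᵥ b) * (a ⬝ᵥ W⁻¹ *ᵥ b)) := by
        have h1 : W.det * 1 ≤ W.det *
            ((1 + β * B) * (1 - α * A) + α * β * ((a ⬝ᵥ W⁻¹ *ᵥ b) * (a ⬝ᵥ W⁻¹ *ᵥ b))) := by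
          rw [mul_one]; exact hdet
        exact (mul_le_mul_iff_right₀ hdetpos).mp h1
      nlinarith [mul_nonneg hA (sub_nonneg.mpr hα1), mul_nonneg hB (sub_nonneg.mpr hβ1),
        mul_pos hαpos hβpos, mul_nonneg (mul_pos hαpos hβpos).le (sub_nonneg.mpr hcs)]
    · have hc1 : (C j').card = 1 := by
        have := Finset.card_pos.mpr hj'
        omega
      obtain ⟨z, hz⟩ := Finset.card_eq_one.mp hc1
      have hiz : i = z := by
        rw [hz] at hi
        simpa using hi
      have hma : clusterMean x (dflt j') (C j') = x i := by
        rw [hz, hiz]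
        simp [clusterMean]
      have ha0 : a = 0 := by rw [ha, hma]; simp
      have hA0 : A = 0 := by rw [hA', ha0]; simp
      rw [hA0]; exact hB
  have expand : ∀ a b : Fin d → ℝ,
      2 * (((2 : ℝ)⁻¹ • (a + b)) ⬝ᵥ (W⁻¹ *ᵥ (b - a)))
        = (b ⬝ᵥ W⁻¹ *ᵥ b) - (a ⬝ᵥ W⁻¹ *ᵥ a) := by
    intro a b
    rw [smul_dotProduct, Matrix.mulVec_sub, dotProduct_sub,
      add_dotProduct, add_dotProduct, dot_symm _ hWinvsym b a]
    simp only [smul_eq_mul]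
    ring
  constructor
  · intro i hi
    rw [hh (x i)]
    have e1 : x i - (2 : ℝ)⁻¹ • (clusterMean x (dflt j) (C j) + clusterMean x (dflt l) (C l))
        = (2 : ℝ)⁻¹ • ((x i - clusterMean x (dflt j) (C j))
            + (x i - clusterMean x (dflt l) (C l))) := by
      ext t
      simp only [Pi.sub_apply, Pi.smul_apply, Pi.add_apply, smul_eq_mul]
      ring
    have e2 : clusterMean x (dflt j) (C j) - clusterMean x (dflt l) (C l)
        = (x i - clusterMean x (dflt l) (C l)) - (x i - clusterMean x (dflt j) (C j)) := by
      abel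
    rw [e1, e2, expand]
    have := key j l hjl hj hl i hi
    linarith
  · intro i hi
    rw [hh (x i)]
    have e1 : x i - (2 : ℝ)⁻¹ • (clusterMean x (dflt j) (C j) + clusterMean x (dflt l) (C l))
        = (2 : ℝ)⁻¹ • ((x i - clusterMean x (dflt j) (C j))
            + (x i - clusterMean x (dflt l) (C l))) := by
      ext t
      simp only [Pi.sub_apply, Pi.smul_apply, Pi.add_apply, smul_eq_mul]
      ring
    have e2 : clusterMean x (dflt j) (C j) - clusterMean x (dflt l) (C l)
        = (x i - clusterMean x (dflt l) (C l)) - (x i - clusterMean x (dflt j) (C j)) := by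
      abel
    rw [e1, e2, expand]
    have := key l j (Ne.symm hjl) hl hj i hi
    linarith
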